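/- Let n ≥ 2, m ∈ ℤ, ℓ ∈ ℕ and let h : [0,∞) → ℝ be continuous with h = 0 on [b,∞) for some b ∈ (0,1). Define G(ψ) = (sin ψ)^{−m} · ∫_{sin ψ}^{1} h(ρ) · ρ · K_ℓ(ψ,ρ) / √(ρ² − sin²ψ) dρ for ψ ∈ (0, π/2). Then for every t ∈ (0,1): (1−t)^{−(n−2)/2} · G(arccos √t) = ∫₀^{t} ( h(√(1−s)) / 2 ) · F_ℓ(t,s) / √(t−s) ds. -/

import Mathlib

open MeasureTheory Real

/-- The kernel `K_ℓ(ψ, ρ) = ρ^{m+n-2} Σ_{σ=±1} σ^ℓ (sin(arcsin(sin ψ/ρ) - σψ))^{m+n-2}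
C_ℓ(cos(arcsin(sin ψ/ρ) - σψ))`, where `C` is the Gegenbauer polynomial `C_ℓ^{(n-2)/2}`. -/
noncomputable def Kker (n : ℕ) (m : ℤ) (ℓ : ℕ) (C : Polynomial ℝ) (ψ ρ : ℝ) : ℝ :=
  ρ ^ (m + (n : ℤ) - 2) *
    (Real.sin (Real.arcsin (Real.sin ψ / ρ) - ψ) ^ (m + (n : ℤ) - 2) *
        C.eval (Real.cos (Real.arcsin (Real.sin ψ / ρ) - ψ)) +
      (-1 : ℝ) ^ ℓ * Real.sin (Real.arcsin (Real.sin ψ / ρ) + ψ) ^ (m + (n : ℤ) - 2) *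
        C.eval (Real.cos (Real.arcsin (Real.sin ψ / ρ) + ψ)))

/-- The kernel `F_ℓ(t, s) = Σ_{σ=±1} σ^ℓ (√t - σ√(t-s))^{m+n-2}
C_ℓ((√t √(t-s) + σ(1-t)) / √(1-s))`. -/
noncomputable def Fker (n : ℕ) (m : ℤ) (ℓ : ℕ) (C : Polynomial ℝ) (t s : ℝ) : ℝ :=
  (Real.sqrt t - Real.sqrt (t - s)) ^ (m + (n : ℤ) - 2) *
      C.eval ((Real.sqrt t * Real.sqrt (t - s) + (1 - t)) / Real.sqrt (1 - s)) +
    (-1 : ℝ) ^ ℓ * (Real.sqrt t + Real.sqrt (t - s)) ^ (m + (n : ℤ) - 2) *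
      C.eval ((Real.sqrt t * Real.sqrt (t - s) - (1 - t)) / Real.sqrt (1 - s))

lemma key (d : ℕ) (m : ℤ) (ℓ : ℕ) (C : Polynomial ℝ) (t u H : ℝ)
    (hu0 : 0 < u) (hut : u < t) (ht1 : t < 1) :
    (1 - t) ^ (-(d : ℝ) / 2) * Real.sqrt (1 - t) ^ (-m) *
      (|-(1 / (2 * Real.sqrt (1 - u)))| *
        (H * Real.sqrt (1 - u) * Kker (d + 2) m ℓ C (Real.arccos (Real.sqrt t)) (Real.sqrt (1 - u)) /
          Real.sqrt (Real.sqrt (1 - u) ^ 2 - Real.sqrt (1 - t) ^ 2))) =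
    H / 2 * Fker (d + 2) m ℓ C t u / Real.sqrt (t - u) := by
  have ht0 : 0 < t := hu0.trans hut
  have h1u : 0 < 1 - u := by linarith
  have h1t : 0 < 1 - t := by linarith
  have htu : 0 < t - u := by linarith
  set a := Real.sqrt (1 - t) with ha_def
  set ρ := Real.sqrt (1 - u) with hρ_def
  set τ := Real.sqrt (t - u) with hτ_def
  have ha : 0 < a := Real.sqrt_pos.mpr h1t
  have hρ : 0 < ρ := Real.sqrt_pos.mpr h1u
  have hτ : 0 < τ := Real.sqrt_pos.mpr htu
  have ha2 : a ^ 2 = 1 - t := Real.sq_sqrt h1t.le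
  have hρ2 : ρ ^ 2 = 1 - u := Real.sq_sqrt h1u.le
  have hτ2 : τ ^ 2 = t - u := Real.sq_sqrt htu.le
  have haρ : a < ρ := Real.sqrt_lt_sqrt h1t.le (by linarith)
  have hcos : Real.cos (Real.arccos (Real.sqrt t)) = Real.sqrt t :=
    Real.cos_arccos (by nlinarith [Real.sqrt_nonneg t]) (Real.sqrt_le_one.mpr ht1.le)
  have hsin : Real.sin (Real.arccos (Real.sqrt t)) = a := by
    rw [Real.sin_arccos, Real.sq_sqrt ht0.le]
  have hx1 : a / ρ ≤ 1 := by rw [div_le_one hρ]; exact haρ.le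
  have hsinθ : Real.sin (Real.arcsin (a / ρ)) = a / ρ :=
    Real.sin_arcsin (by nlinarith [div_nonneg ha.le hρ.le]) hx1
  have hcosθ : Real.cos (Real.arcsin (a / ρ)) = τ / ρ := by
    rw [Real.cos_arcsin, show 1 - (a / ρ) ^ 2 = (t - u) / ρ ^ 2 by
      rw [div_pow, ha2, hρ2]; field_simp; ring,
      Real.sqrt_div htu.le, Real.sqrt_sq hρ.le]
  have h1 : Real.sin (Real.arcsin (a / ρ) - Real.arccos (Real.sqrt t)) =
      a / ρ * (Real.sqrt t - τ) := by
    rw [Real.sin_sub, hsinθ, hcosθ, hsin, hcos]; ring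
  have h2 : Real.cos (Real.arcsin (a / ρ) - Real.arccos (Real.sqrt t)) =
      (Real.sqrt t * τ + (1 - t)) / ρ := by
    rw [Real.cos_sub, hsinθ, hcosθ, hsin, hcos]
    field_simp
    linear_combination ha2
  have h3 : Real.sin (Real.arcsin (a / ρ) + Real.arccos (Real.sqrt t)) =
      a / ρ * (Real.sqrt t + τ) := by
    rw [Real.sin_add, hsinθ, hcosθ, hsin, hcos]; ring
  have h4 : Real.cos (Real.arcsin (a / ρ) + Real.arccos (Real.sqrt t)) =
      (Real.sqrt t * τ - (1 - t)) / ρ := by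
    rw [Real.cos_add, hsinθ, hcosθ, hsin, hcos]
    field_simp
    linear_combination -ha2
  have hp : m + ((d + 2 : ℕ) : ℤ) - 2 = m + (d : ℤ) := by push_cast; ring
  have hK : Kker (d + 2) m ℓ C (Real.arccos (Real.sqrt t)) ρ =
      a ^ (m + (d : ℤ)) * Fker (d + 2) m ℓ C t u := by
    simp only [Kker, Fker]
    rw [hsin, ← hρ_def, ← hτ_def, h1, h2, h3, h4, hp]
    have e1 : (a / ρ * (Real.sqrt t - τ)) ^ (m + (d : ℤ)) =
        a ^ (m + (d : ℤ)) * (Real.sqrt t - τ) ^ (m + (d : ℤ)) / ρ ^ (m + (d : ℤ)) := by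
      rw [div_mul_eq_mul_div, div_zpow, mul_zpow]
    have e2 : (a / ρ * (Real.sqrt t + τ)) ^ (m + (d : ℤ)) =
        a ^ (m + (d : ℤ)) * (Real.sqrt t + τ) ^ (m + (d : ℤ)) / ρ ^ (m + (d : ℤ)) := by
      rw [div_mul_eq_mul_div, div_zpow, mul_zpow]
    have hρp : ρ ^ (m + (d : ℤ)) ≠ 0 := zpow_ne_zero _ hρ.ne'
    rw [e1, e2]
    field_simp
  have hpow : (1 - t) ^ (-(d : ℝ) / 2) = a ^ (-(d : ℤ)) := by
    rw [show (-(d : ℝ) / 2) = (1 / 2 : ℝ) * ((-(d : ℤ) : ℤ) : ℝ) by push_cast; ring,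
      Real.rpow_mul h1t.le, ← Real.sqrt_eq_rpow, Real.rpow_intCast, ← ha_def]
  have habs : |-(1 / (2 * ρ))| = 1 / (2 * ρ) := by
    rw [abs_neg, abs_of_pos (by positivity)]
  have hden : Real.sqrt (ρ ^ 2 - a ^ 2) = τ := by
    rw [hρ2, ha2, show 1 - u - (1 - t) = t - u by ring, ← hτ_def]
  rw [habs, hden, hK, hpow]
  have hz : a ^ (-(d : ℤ)) * a ^ (-m) * a ^ (m + (d : ℤ)) = 1 := by
    rw [← zpow_add₀ ha.ne', ← zpow_add₀ ha.ne',
      show -(d : ℤ) + -m + (m + (d : ℤ)) = 0 by ring, zpow_zero]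
  have hstep : 1 / (2 * ρ) * (H * ρ * (a ^ (m + (d : ℤ)) * Fker (d + 2) m ℓ C t u) / τ) =
      a ^ (m + (d : ℤ)) * (H / 2 * Fker (d + 2) m ℓ C t u / τ) := by
    field_simp
  rw [hstep]
  linear_combination (H / 2 * Fker (d + 2) m ℓ C t u / τ) * hz

/-- Lemma 3.3 (here `n = d + 2 ≥ 2`): change of variables turning the Abel-type equation
with kernel `K_ℓ` into one with kernel `F_ℓ`. `C` is the Gegenbauer polynomial of degree
`ℓ` with parameter `(n-2)/2`, normalized by `C(1) = 1`. -/
theorem stmt9 (d : ℕ) (m : ℤ) (ℓ : ℕ)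
    (C : Polynomial ℝ) (hCdeg : C.natDegree = ℓ) (hC1 : C.eval 1 = 1)
    (hCode : ∀ x : ℝ, (1 - x ^ 2) * (Polynomial.derivative (Polynomial.derivative C)).eval x -
      ((d : ℝ) + 1) * x * (Polynomial.derivative C).eval x +
      (ℓ : ℝ) * ((ℓ : ℝ) + (d : ℝ)) * C.eval x = 0)
    (h : ℝ → ℝ) (hh : Continuous h) (b : ℝ) (hb : b ∈ Set.Ioo (0 : ℝ) 1)
    (hhb : ∀ x ≥ b, h x = 0)
    (G : ℝ → ℝ)
    (hG : ∀ ψ ∈ Set.Ioo 0 (Real.pi / 2), G ψ = Real.sin ψ ^ (-m) *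
      ∫ ρ in (Real.sin ψ)..1,
        h ρ * ρ * Kker (d + 2) m ℓ C ψ ρ / Real.sqrt (ρ ^ 2 - Real.sin ψ ^ 2))
    (t : ℝ) (ht : t ∈ Set.Ioo (0 : ℝ) 1) :
    (1 - t) ^ (-(d : ℝ) / 2) * G (Real.arccos (Real.sqrt t)) =
      ∫ s in (0 : ℝ)..t,
        (h (Real.sqrt (1 - s)) / 2) * Fker (d + 2) m ℓ C t s / Real.sqrt (t - s) := by
  obtain ⟨ht0, ht1⟩ := ht
  have hst0 : 0 < Real.sqrt t := Real.sqrt_pos.mpr ht0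
  have hst1 : Real.sqrt t < 1 := (Real.sqrt_lt' one_pos).mpr (by linarith)
  have hψmem : Real.arccos (Real.sqrt t) ∈ Set.Ioo 0 (Real.pi / 2) :=
    ⟨Real.arccos_pos.mpr hst1, Real.arccos_lt_pi_div_two.mpr hst0⟩
  have hψsin : Real.sin (Real.arccos (Real.sqrt t)) = Real.sqrt (1 - t) := by
    rw [Real.sin_arccos, Real.sq_sqrt ht0.le]
  rw [hG _ hψmem, hψsin]
  have hle : Real.sqrt (1 - t) ≤ 1 := Real.sqrt_le_one.mpr (by linarith)
  rw [intervalIntegral.integral_of_le hle, MeasureTheory.integral_Ioc_eq_integral_Ioo,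
    intervalIntegral.integral_of_le ht0.le, MeasureTheory.integral_Ioc_eq_integral_Ioo]
  have himg : (fun u => Real.sqrt (1 - u)) '' Set.Ioo 0 t = Set.Ioo (Real.sqrt (1 - t)) 1 := by
    ext x
    constructor
    · rintro ⟨u, ⟨hu0, hut⟩, rfl⟩
      exact ⟨Real.sqrt_lt_sqrt (by linarith) (by linarith),
        (Real.sqrt_lt' one_pos).mpr (by nlinarith)⟩
    · rintro ⟨hx1, hx2⟩
      have hx0 : 0 < x := lt_of_le_of_lt (Real.sqrt_nonneg _) hx1
      have hxx : 1 - t < x ^ 2 := (Real.sqrt_lt' hx0).mp hx1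
      refine ⟨1 - x ^ 2, ⟨by nlinarith, by linarith⟩, ?_⟩
      show Real.sqrt (1 - (1 - x ^ 2)) = x
      rw [show 1 - (1 - x ^ 2) = x ^ 2 by ring, Real.sqrt_sq hx0.le]
  have hderiv : ∀ u ∈ Set.Ioo (0 : ℝ) t,
      HasDerivWithinAt (fun u => Real.sqrt (1 - u)) (-(1 / (2 * Real.sqrt (1 - u))))
        (Set.Ioo 0 t) u := by
    intro u hu
    have h1u : (0 : ℝ) < 1 - u := by linarith [hu.2]
    have h0 : HasDerivAt (fun x : ℝ => 1 - x) (-1) u := by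
      simpa using (hasDerivAt_id u).const_sub (1 : ℝ)
    have := (Real.hasDerivAt_sqrt h1u.ne').comp u h0
    have h2 : HasDerivAt (fun u : ℝ => Real.sqrt (1 - u))
        (-(1 / (2 * Real.sqrt (1 - u)))) u := by
      rw [show -(1 / (2 * Real.sqrt (1 - u))) = 1 / (2 * Real.sqrt (1 - u)) * -1 by ring]
      exact this
    exact h2.hasDerivWithinAt
  have hinj : Set.InjOn (fun u => Real.sqrt (1 - u)) (Set.Ioo 0 t) := by
    have : StrictAntiOn (fun u => Real.sqrt (1 - u)) (Set.Ioo 0 t) := by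
      intro u hu v hv huv
      exact Real.sqrt_lt_sqrt (by linarith [hv.2]) (by linarith)
    exact this.injOn
  rw [← himg, MeasureTheory.integral_image_eq_integral_abs_deriv_smul measurableSet_Ioo
    hderiv hinj, ← mul_assoc, ← MeasureTheory.integral_const_mul]
  apply MeasureTheory.setIntegral_congr_fun measurableSet_Ioo
  intro u hu
  simpa only [smul_eq_mul] using key d m ℓ C t u (h (Real.sqrt (1 - u))) hu.1 hu.2 ht1
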